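/- arXiv:1508.00614 — 2 statements merged into one kernel-verified Lean document; each statement's English description precedes it below -/
import Mathlib

section
/- A largest popular matching in a bipartite graph G with strict preference lists has size at least 2/3 of the size of a maximum matching of G. -/
open Classical

/-- A bipartite graph `G = (A ∪ B, E)` with strict preference lists:
`adj` is the edge relation, and each vertex ranks its neighbors by a rank
function (lower rank = more preferred), injective on neighbors. -/
structure PrefSys (A B : Type) where
  adj : A → B → Prop
  rankA : A → B → ℕ
  rankB : B → A → ℕ
  rankA_inj : ∀ a b b', adj a b → adj a b' → rankA a b = rankA a b' → b = b'
  rankB_inj : ∀ b a a', adj a b → adj a' b → rankB b a = rankB b a' → a = a'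

namespace PrefSys

variable {A B : Type} (P : PrefSys A B)

/-- `M` is a matching of `G`: a set of edges, no two sharing a vertex. -/
def IsMatching (M : Finset (A × B)) : Prop :=
  (∀ p ∈ M, P.adj p.1 p.2) ∧
  (∀ p ∈ M, ∀ q ∈ M, p.1 = q.1 → p = q) ∧
  (∀ p ∈ M, ∀ q ∈ M, p.2 = q.2 → p = q)

/-- Vertex `a ∈ A` prefers matching `M` to matching `M'`:
`a` is matched in `M` and either unmatched in `M'` or matched to a strictly
worse partner in `M'`. -/
def prefA (M M' : Finset (A × B)) (a : A) : Prop :=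
  ∃ b, (a, b) ∈ M ∧ ∀ b', (a, b') ∈ M' → P.rankA a b < P.rankA a b'

/-- Vertex `b ∈ B` prefers matching `M` to matching `M'`. -/
def prefB (M M' : Finset (A × B)) (b : B) : Prop :=
  ∃ a, (a, b) ∈ M ∧ ∀ a', (a', b) ∈ M' → P.rankB b a < P.rankB b a'

/-- `φ(M, M')`: the number of vertices preferring `M` to `M'`. -/
noncomputable def phi (M M' : Finset (A × B)) : ℕ :=
  Nat.card {a : A // P.prefA M M' a} + Nat.card {b : B // P.prefB M M' b}

/-- A matching is popular if it never loses a head-to-head election. -/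
def Popular (M : Finset (A × B)) : Prop :=
  P.IsMatching M ∧ ∀ M', P.IsMatching M' → P.phi M' M ≤ P.phi M M'

/-- `a`'s vote on the edge `(a,b)` versus its `M`-partner is `+`. -/
def voteAplus (M : Finset (A × B)) (a : A) (b : B) : Prop :=
  ∀ b', (a, b') ∈ M → P.rankA a b < P.rankA a b'

/-- `b`'s vote on the edge `(a,b)` versus its `M`-partner is `+`. -/
def voteBplus (M : Finset (A × B)) (a : A) (b : B) : Prop :=
  ∀ a', (a', b) ∈ M → P.rankB b a < P.rankB b a'

/-- `(a,b)` is a blocking edge (an edge outside `M` labeled `(+,+)`). -/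
def Blocking (M : Finset (A × B)) (a : A) (b : B) : Prop :=
  P.adj a b ∧ (a, b) ∉ M ∧ P.voteAplus M a b ∧ P.voteBplus M a b

/-- A stable matching: a matching with no blocking edge. -/
def Stable (M : Finset (A × B)) : Prop :=
  P.IsMatching M ∧ ∀ a b, ¬ P.Blocking M a b

/-- A dominant matching: popular, and more popular than every larger matching. -/
def Dominant (M : Finset (A × B)) : Prop :=
  P.Popular M ∧ ∀ M', P.IsMatching M' → M.card < M'.card → P.phi M' M < P.phi M M'

/-- The edge `(a,b)` survives in the subgraph `G_M` (i.e. it is an edge of `G`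
that is in `M` or is not labeled `(-,-)`). -/
def inGM (M : Finset (A × B)) (a : A) (b : B) : Prop :=
  P.adj a b ∧ ((a, b) ∈ M ∨ P.voteAplus M a b ∨ P.voteBplus M a b)

end PrefSys

set_option linter.unusedSectionVars false
set_option linter.unusedVariables false
set_option maxHeartbeats 1000000

section GS

variable {A B : Type} [Fintype A] [Fintype B] (P : PrefSys A B)

noncomputable def gsCand (R : Finset (A × B)) (a : A) : Finset B :=
  Finset.univ.filter fun b => P.adj a b ∧ (a, b) ∉ R

noncomputable def gsProp (R : Finset (A × B)) : Finset (A × B) :=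
  Finset.univ.filter fun p =>
    p.2 ∈ gsCand P R p.1 ∧ ∀ b' ∈ gsCand P R p.1, P.rankA p.1 p.2 ≤ P.rankA p.1 b'

noncomputable def gsRej (R : Finset (A × B)) : Finset (A × B) :=
  (gsProp P R).filter fun p => ∃ q ∈ gsProp P R, q.2 = p.2 ∧ P.rankB p.2 q.1 < P.rankB p.2 p.1

noncomputable def gsStep (R : Finset (A × B)) : Finset (A × B) := R ∪ gsRej P R

def GSInv (R : Finset (A × B)) : Prop :=
  ∀ p ∈ R, ∃ a', (a', p.2) ∈ gsProp P R ∧ P.rankB p.2 a' < P.rankB p.2 p.1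

lemma mem_cand {R : Finset (A × B)} {a b} :
    b ∈ gsCand P R a ↔ P.adj a b ∧ (a, b) ∉ R := by
  simp [gsCand]

lemma mem_prop {R : Finset (A × B)} {p : A × B} :
    p ∈ gsProp P R ↔ p.2 ∈ gsCand P R p.1 ∧ ∀ b' ∈ gsCand P R p.1, P.rankA p.1 p.2 ≤ P.rankA p.1 b' := by
  simp [gsProp]

lemma subset_step (R : Finset (A × B)) : R ⊆ gsStep P R := Finset.subset_union_left

lemma cand_step_subset (R : Finset (A × B)) (a : A) : gsCand P (gsStep P R) a ⊆ gsCand P R a := by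
  intro b hb
  rw [mem_cand] at hb ⊢
  exact ⟨hb.1, fun h => hb.2 (subset_step P R h)⟩

/-- the best proposer of `b` survives into `gsProp (gsStep R)`. -/
lemma exists_best {R : Finset (A × B)} {b : B} (h : ∃ a, (a, b) ∈ gsProp P R) :
    ∃ x, (x, b) ∈ gsProp P (gsStep P R) ∧ ∀ a, (a, b) ∈ gsProp P R → P.rankB b x ≤ P.rankB b a := by
  classical
  obtain ⟨a0, ha0⟩ := h
  set T := (gsProp P R).filter (fun p => p.2 = b) with hT
  have hne : T.Nonempty := ⟨(a0, b), by simp [hT, ha0]⟩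
  obtain ⟨q, hqT, hqmin⟩ := T.exists_min_image (fun p => P.rankB b p.1) hne
  have hq : q ∈ gsProp P R ∧ q.2 = b := by simpa [hT] using hqT
  have hmin : ∀ a, (a, b) ∈ gsProp P R → P.rankB b q.1 ≤ P.rankB b a := by
    intro a ha
    exact hqmin (a, b) (by simp [hT, ha])
  have hqb : (q.1, b) ∈ gsProp P R := by
    have := hq.1
    rwa [← hq.2, Prod.mk.eta]
  have hnotrej : (q.1, b) ∉ gsRej P R := by
    intro hr
    simp only [gsRej, Finset.mem_filter] at hr
    obtain ⟨-, q', hq', hq'2, hlt⟩ := hr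
    have := hmin q'.1 (by rwa [← hq'2, Prod.mk.eta])
    omega
  refine ⟨q.1, ?_, hmin⟩
  rw [mem_prop] at hqb ⊢
  constructor
  · rw [mem_cand]
    have hc := hqb.1
    rw [mem_cand] at hc
    refine ⟨hc.1, ?_⟩
    intro hmem
    rcases Finset.mem_union.1 hmem with h | h
    · exact hc.2 h
    · exact hnotrej h
  · intro b' hb'
    exact hqb.2 b' (cand_step_subset P R q.1 hb')

lemma inv_step {R : Finset (A × B)} (h : GSInv P R) : GSInv P (gsStep P R) := by
  intro p hp
  rcases Finset.mem_union.1 hp with hpR | hprej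
  · obtain ⟨a', ha', hlt⟩ := h p hpR
    obtain ⟨x, hx, hxmin⟩ := exists_best P ⟨a', ha'⟩
    exact ⟨x, hx, lt_of_le_of_lt (hxmin a' ha') hlt⟩
  · simp only [gsRej, Finset.mem_filter] at hprej
    obtain ⟨hpprop, q, hq, hq2, hlt⟩ := hprej
    have hqb : (q.1, p.2) ∈ gsProp P R := by rwa [← hq2, Prod.mk.eta]
    obtain ⟨x, hx, hxmin⟩ := exists_best P ⟨q.1, hqb⟩
    exact ⟨x, hx, lt_of_le_of_lt (hxmin q.1 hqb) hlt⟩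

lemma stable_of_fixed {R : Finset (A × B)} (hinv : GSInv P R) (hfix : gsStep P R = R) :
    P.Stable (gsProp P R) := by
  have hrej : gsRej P R = ∅ := by
    rw [Finset.eq_empty_iff_forall_notMem]
    intro p hp
    have hpprop : p ∈ gsProp P R := (Finset.mem_filter.1 hp).1
    have hpc := (mem_prop P).1 hpprop
    have hnotR : p ∉ R := ((mem_cand P).1 (by simpa using hpc.1)).2
    exact hnotR (hfix ▸ Finset.mem_union_right R hp)
  have hadj : ∀ p ∈ gsProp P R, P.adj p.1 p.2 := by
    intro p hp
    exact ((mem_cand P).1 ((mem_prop P).1 hp).1).1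
  constructor
  · refine ⟨hadj, ?_, ?_⟩
    · intro p hp q hq h1
      have hp' := (mem_prop P).1 hp
      have hq' := (mem_prop P).1 hq
      have h1' : P.rankA p.1 p.2 ≤ P.rankA p.1 q.2 := by
        have := hp'.2 q.2 (h1 ▸ hq'.1)
        exact this
      have h2' : P.rankA p.1 q.2 ≤ P.rankA p.1 p.2 := by
        have := hq'.2 p.2 (h1 ▸ hp'.1 : p.2 ∈ gsCand P R q.1)
        rw [← h1] at this
        -- this : rankA q.1 q.2 ≤ rankA q.1 p.2 with q.1 = p.1 rewritten?
        exact this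
      have heq : P.rankA p.1 p.2 = P.rankA p.1 q.2 := le_antisymm h1' h2'
      have : p.2 = q.2 := P.rankA_inj p.1 p.2 q.2 (hadj p hp) (h1 ▸ hadj q hq) heq
      exact Prod.ext h1 this
    · intro p hp q hq h2
      by_contra hne
      have hne1 : p.1 ≠ q.1 := fun h => hne (Prod.ext h h2)
      have hadjp := hadj p hp
      have hadjq := hadj q hq
      have hrneq : P.rankB p.2 p.1 ≠ P.rankB p.2 q.1 := by
        intro h
        exact hne1 (P.rankB_inj p.2 p.1 q.1 hadjp (h2 ▸ hadjq) h)
      rcases lt_or_gt_of_ne hrneq with hlt | hgt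
      · have : q ∈ gsRej P R := by
          simp only [gsRej, Finset.mem_filter]
          exact ⟨hq, p, hp, h2, by rw [h2] at hlt; exact hlt⟩
        rw [hrej] at this; simp at this
      · have : p ∈ gsRej P R := by
          simp only [gsRej, Finset.mem_filter]
          exact ⟨hp, q, hq, h2.symm, hgt⟩
        rw [hrej] at this; simp at this
  · rintro a b ⟨hab, hnm, hvA, hvB⟩
    by_cases hR : (a, b) ∈ R
    · obtain ⟨a', ha', hlt⟩ := hinv (a, b) hR
      have := hvB a' ha'
      simp only at this hlt
      omega
    · have hbc : b ∈ gsCand P R a := (mem_cand P).2 ⟨hab, hR⟩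
      obtain ⟨b', hb', hbmin⟩ := (gsCand P R a).exists_min_image (fun c => P.rankA a c) ⟨b, hbc⟩
      have hprop : (a, b') ∈ gsProp P R := (mem_prop P).2 ⟨hb', fun c hc => hbmin c hc⟩
      have h1 := hvA b' hprop
      have h2 := hbmin b hbc
      omega

lemma inv_iterate : ∀ n, GSInv P ((gsStep P)^[n] ∅) := by
  intro n
  induction n with
  | zero => intro p hp; simp at hp
  | succ n ih =>
      rw [Function.iterate_succ_apply']
      exact inv_step P ih

theorem exists_stable : ∃ S : Finset (A × B), P.Stable S := by
  classical
  have key : ∃ n, gsStep P ((gsStep P)^[n] ∅) = (gsStep P)^[n] ∅ := by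
    by_contra h
    push_neg at h
    have grow : ∀ n, n ≤ ((gsStep P)^[n] (∅ : Finset (A × B))).card := by
      intro n
      induction n with
      | zero => simp
      | succ n ih =>
          have hsub : (gsStep P)^[n] ∅ ⊆ gsStep P ((gsStep P)^[n] ∅) := subset_step P _
          have hss : (gsStep P)^[n] (∅ : Finset (A × B)) ⊂ gsStep P ((gsStep P)^[n] ∅) :=
            ⟨hsub, fun hsub2 => h n (le_antisymm hsub2 hsub)⟩
          have := Finset.card_lt_card hss
          rw [Function.iterate_succ_apply']
          omega
    have hb := grow (Fintype.card (A × B) + 1)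
    have := Finset.card_le_univ ((gsStep P)^[Fintype.card (A × B) + 1] (∅ : Finset (A × B)))
    omega
  obtain ⟨n, hn⟩ := key
  exact ⟨gsProp P ((gsStep P)^[n] ∅), stable_of_fixed P (inv_iterate P n) hn⟩

end GS

section Double

variable {A B : Type} [Fintype A] [Fintype B] (P : PrefSys A B)

noncomputable def boundA : ℕ := (Finset.univ.sup fun p : A × B => P.rankA p.1 p.2) + 1
noncomputable def boundB : ℕ := (Finset.univ.sup fun p : A × B => P.rankB p.2 p.1) + 1

lemma rankA_lt_boundA (a : A) (b : B) : P.rankA a b < boundA P := by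
  have : P.rankA a b ≤ Finset.univ.sup fun p : A × B => P.rankA p.1 p.2 :=
    Finset.le_sup (f := fun p : A × B => P.rankA p.1 p.2) (Finset.mem_univ (a, b))
  simp only [boundA]; omega

lemma rankB_lt_boundB (a : A) (b : B) : P.rankB b a < boundB P := by
  have : P.rankB b a ≤ Finset.univ.sup fun p : A × B => P.rankB p.2 p.1 :=
    Finset.le_sup (f := fun p : A × B => P.rankB p.2 p.1) (Finset.mem_univ (a, b))
  simp only [boundB]; omega

def dadj : (A ⊕ A) → (B ⊕ A) → Prop
  | Sum.inl a, Sum.inl b => P.adj a b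
  | Sum.inr a, Sum.inl b => P.adj a b
  | Sum.inl a, Sum.inr c => c = a
  | Sum.inr a, Sum.inr c => c = a

noncomputable def drankA : (A ⊕ A) → (B ⊕ A) → ℕ
  | Sum.inl a, Sum.inl b => P.rankA a b
  | Sum.inr a, Sum.inl b => P.rankA a b + 1
  | Sum.inl _, Sum.inr _ => boundA P
  | Sum.inr _, Sum.inr _ => 0

noncomputable def drankB : (B ⊕ A) → (A ⊕ A) → ℕ
  | Sum.inl b, Sum.inr a => P.rankB b a
  | Sum.inl b, Sum.inl a => P.rankB b a + boundB P
  | Sum.inr _, Sum.inl _ => 0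
  | Sum.inr _, Sum.inr _ => 1

noncomputable def double : PrefSys (A ⊕ A) (B ⊕ A) where
  adj := dadj P
  rankA := drankA P
  rankB := drankB P
  rankA_inj := by
    rintro (a | a) (b | c) (b' | c') h1 h2 h3 <;>
      simp only [dadj, drankA] at h1 h2 h3
    · exact congrArg Sum.inl (P.rankA_inj a b b' h1 h2 h3)
    · exact absurd h3 (Nat.ne_of_lt (rankA_lt_boundA P a b))
    · exact absurd h3.symm (Nat.ne_of_lt (rankA_lt_boundA P a b'))
    · rw [h1, h2]
    · exact congrArg Sum.inl (P.rankA_inj a b b' h1 h2 (by omega))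
    · omega
    · omega
    · rw [h1, h2]
  rankB_inj := by
    rintro (b | c) (a | a') (a'' | a''') h1 h2 h3 <;>
      simp only [dadj, drankB] at h1 h2 h3
    · exact congrArg Sum.inl (P.rankB_inj b a a'' h1 h2 (by omega))
    · exact absurd h3 (by have := rankB_lt_boundB P a''' b; omega)
    · exact absurd h3 (by have := rankB_lt_boundB P a' b; omega)
    · exact congrArg Sum.inr (P.rankB_inj b a' a''' h1 h2 h3)
    · exact congrArg Sum.inl (h1.symm.trans h2)
    · omega
    · omega
    · exact congrArg Sum.inr (h1.symm.trans h2)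

end Double

section DoubleLemmas

variable {A B : Type} [Fintype A] [Fintype B] (P : PrefSys A B)
variable (S' : Finset ((A ⊕ A) × (B ⊕ A)))

/-- `a` is matched to a real woman via its level-0 copy. -/
def lv0 (a : A) : Prop := ∃ b, ((Sum.inl a : A ⊕ A), (Sum.inl b : B ⊕ A)) ∈ S'

/-- `a` is matched to a real woman via its level-1 copy. -/
def lv1 (a : A) : Prop := ∃ b, ((Sum.inr a : A ⊕ A), (Sum.inl b : B ⊕ A)) ∈ S'

def bl0 (b : B) : Prop := ∃ x, ((Sum.inl x : A ⊕ A), (Sum.inl b : B ⊕ A)) ∈ S'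

def bl1 (b : B) : Prop := ∃ x, ((Sum.inr x : A ⊕ A), (Sum.inl b : B ⊕ A)) ∈ S'

/-- The matching of `G` induced by a matching of the doubled instance. -/
noncomputable def DD : Finset (A × B) :=
  Finset.univ.filter fun p =>
    ((Sum.inl p.1 : A ⊕ A), (Sum.inl p.2 : B ⊕ A)) ∈ S' ∨
    ((Sum.inr p.1 : A ⊕ A), (Sum.inl p.2 : B ⊕ A)) ∈ S'

noncomputable def yA (a : A) : ℤ := if lv1 S' a then -1 else if lv0 S' a then 1 else 0

noncomputable def yB (b : B) : ℤ := if bl1 S' b then 1 else if bl0 S' b then -1 else 0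

lemma mem_DD {p : A × B} :
    p ∈ DD S' ↔ ((Sum.inl p.1 : A ⊕ A), (Sum.inl p.2 : B ⊕ A)) ∈ S' ∨
      ((Sum.inr p.1 : A ⊕ A), (Sum.inl p.2 : B ⊕ A)) ∈ S' := by
  simp [DD]

variable {S'}
variable (hS : (double P).Stable S')

section
include hS

lemma sm1 {x : A ⊕ A} {y y' : B ⊕ A} (h : (x, y) ∈ S') (h' : (x, y') ∈ S') : y = y' :=
  congrArg Prod.snd (hS.1.2.1 (x, y) h (x, y') h' rfl)

lemma sm2 {x x' : A ⊕ A} {y : B ⊕ A} (h : (x, y) ∈ S') (h' : (x', y) ∈ S') : x = x' :=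
  congrArg Prod.fst (hS.1.2.2 (x, y) h (x', y) h' rfl)

lemma sadj {x : A ⊕ A} {y : B ⊕ A} (h : (x, y) ∈ S') : dadj P x y :=
  hS.1.1 (x, y) h

lemma stab' {x : A ⊕ A} {y : B ⊕ A} (h1 : dadj P x y)
    (h2 : (double P).voteAplus S' x y) (h3 : (double P).voteBplus S' x y) : (x, y) ∈ S' := by
  by_contra h
  exact hS.2 x y ⟨h1, h, h2, h3⟩

lemma dummy_matched (a : A) :
    ((Sum.inl a : A ⊕ A), (Sum.inr a : B ⊕ A)) ∈ S' ∨
    ((Sum.inr a : A ⊕ A), (Sum.inr a : B ⊕ A)) ∈ S' := by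
  by_cases h : ((Sum.inr a : A ⊕ A), (Sum.inr a : B ⊕ A)) ∈ S'
  · exact Or.inr h
  by_cases h' : ((Sum.inl a : A ⊕ A), (Sum.inr a : B ⊕ A)) ∈ S'
  · exact Or.inl h'
  exfalso
  apply h
  apply stab' P hS
  · show dadj P _ _
    simp [dadj]
  · intro y' hy'
    rcases y' with b | c
    · simp only [PrefSys.rankA, double, drankA]
      omega
    · have hc : c = a := by
        have := sadj P hS hy'
        simpa [dadj] using this
      subst hc
      exact absurd hy' h
  · intro x' hx'
    rcases x' with c | c
    · have hc : a = c := by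
        have := sadj P hS hx'
        simpa [dadj] using this
      subst hc
      exact absurd hx' h'
    · have hc : a = c := by
        have := sadj P hS hx'
        simpa [dadj] using this
      subst hc
      exact absurd hx' h

lemma not_both (a : A) (h0 : lv0 S' a) (h1 : lv1 S' a) : False := by
  obtain ⟨b0, hb0⟩ := h0
  obtain ⟨b1, hb1⟩ := h1
  rcases dummy_matched P hS a with h | h
  · exact absurd (sm1 P hS hb0 h) (by simp)
  · exact absurd (sm1 P hS hb1 h) (by simp)

lemma lv1_dummy (a : A) (h : lv1 S' a) :
    ((Sum.inl a : A ⊕ A), (Sum.inr a : B ⊕ A)) ∈ S' := by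
  obtain ⟨b1, hb1⟩ := h
  rcases dummy_matched P hS a with h' | h'
  · exact h'
  · exact absurd (sm1 P hS hb1 h') (by simp)

lemma unmatched_struct (a : A) (h0 : ¬ lv0 S' a) (h1 : ¬ lv1 S' a) :
    ∀ y, ((Sum.inr a : A ⊕ A), y) ∈ S' → False := by
  intro y hy
  rcases y with b | c
  · exact h1 ⟨b, hy⟩
  · have hc : c = a := by
      have := sadj P hS hy
      simpa [dadj] using this
    rw [hc] at hy
    have hc0un : ∀ y', ((Sum.inl a : A ⊕ A), y') ∈ S' → False := by
      intro y' hy'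
      rcases y' with b' | c'
      · exact h0 ⟨b', hy'⟩
      · have hc' : c' = a := by
          have := sadj P hS hy'
          simpa [dadj] using this
        rw [hc'] at hy'
        exact absurd (sm2 P hS hy' hy) (by simp)
    have hmem : ((Sum.inl a : A ⊕ A), (Sum.inr a : B ⊕ A)) ∈ S' := by
      apply stab' P hS
      · show dadj P _ _
        simp [dadj]
      · intro y' hy'
        exact (hc0un y' hy').elim
      · intro x' hx'
        rcases x' with c' | c'
        · have hc' : a = c' := by
            have := sadj P hS hx'
            simpa [dadj] using this
          rw [← hc'] at hx'
          exact (hc0un _ hx').elim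
        · have hc' : a = c' := by
            have := sadj P hS hx'
            simpa [dadj] using this
          rw [← hc'] at hx' ⊢
          simp only [PrefSys.rankB, double, drankB]
          omega
    exact hc0un _ hmem

lemma lv0_dummy (a : A) (h0 : ¬ lv0 S' a) (h1 : ¬ lv1 S' a) :
    ((Sum.inl a : A ⊕ A), (Sum.inr a : B ⊕ A)) ∈ S' := by
  rcases dummy_matched P hS a with h | h
  · exact h
  · exact (unmatched_struct P hS a h0 h1 _ h).elim

lemma extract {b : B} {w : A ⊕ A} (hne : (w, (Sum.inl b : B ⊕ A)) ∉ S')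
    (hadj : dadj P w (Sum.inl b)) (hvA : (double P).voteAplus S' w (Sum.inl b)) :
    ∃ x', (x', (Sum.inl b : B ⊕ A)) ∈ S' ∧
      drankB P (Sum.inl b) x' ≤ drankB P (Sum.inl b) w := by
  by_contra hcon
  push_neg at hcon
  apply hne
  apply stab' P hS hadj hvA
  intro x' hx'
  exact hcon x' hx'

lemma S1 (a : A) (b : B) (h0 : ¬ lv0 S' a) (h1 : ¬ lv1 S' a) (hadj : P.adj a b) :
    ∃ x, ((Sum.inr x : A ⊕ A), (Sum.inl b : B ⊕ A)) ∈ S' ∧ P.rankB b x < P.rankB b a := by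
  have hun := unmatched_struct P hS a h0 h1
  have hne : ((Sum.inr a : A ⊕ A), (Sum.inl b : B ⊕ A)) ∉ S' := fun h => hun _ h
  obtain ⟨x', hx', hle⟩ :=
    extract P hS hne (by simp [dadj, hadj]) (fun y' hy' => (hun y' hy').elim)
  rcases x' with x | x
  · exfalso
    have h2 := rankB_lt_boundB P a b
    simp only [drankB] at hle
    omega
  · refine ⟨x, hx', ?_⟩
    simp only [drankB] at hle
    rcases lt_or_eq_of_le hle with h | h
    · exact h
    · exfalso
      have hx_adj : P.adj x b := by
        have := sadj P hS hx'
        simpa [dadj] using this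
      have hxa : x = a := P.rankB_inj b x a hx_adj hadj h
      subst hxa
      exact hne hx'

lemma S3 (a : A) (b b0 : B) (h : ((Sum.inr a : A ⊕ A), (Sum.inl b0 : B ⊕ A)) ∈ S')
    (hadj : P.adj a b) (hlt : P.rankA a b < P.rankA a b0) :
    ∃ x, ((Sum.inr x : A ⊕ A), (Sum.inl b : B ⊕ A)) ∈ S' ∧ P.rankB b x < P.rankB b a := by
  have hbne : b ≠ b0 := by
    intro he
    rw [he] at hlt
    omega
  have hne : ((Sum.inr a : A ⊕ A), (Sum.inl b : B ⊕ A)) ∉ S' := by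
    intro hmem
    have := sm1 P hS hmem h
    simp only [Sum.inl.injEq] at this
    exact hbne this
  have hvA : (double P).voteAplus S' (Sum.inr a) (Sum.inl b) := by
    intro y' hy'
    have hy : y' = Sum.inl b0 := sm1 P hS hy' h
    subst hy
    simp only [PrefSys.rankA, double, drankA]
    omega
  obtain ⟨x', hx', hle⟩ := extract P hS hne (by simp [dadj, hadj]) hvA
  rcases x' with x | x
  · exfalso
    have h2 := rankB_lt_boundB P a b
    simp only [drankB] at hle
    omega
  · refine ⟨x, hx', ?_⟩
    simp only [drankB] at hle
    rcases lt_or_eq_of_le hle with h' | h'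
    · exact h'
    · exfalso
      have hx_adj : P.adj x b := by
        have := sadj P hS hx'
        simpa [dadj] using this
      have hxa : x = a := P.rankB_inj b x a hx_adj hadj h'
      subst hxa
      exact hne hx'

lemma S4 (a : A) (b b0 : B) (h : ((Sum.inl a : A ⊕ A), (Sum.inl b0 : B ⊕ A)) ∈ S')
    (hadj : P.adj a b) (hlt : P.rankA a b < P.rankA a b0) :
    (∃ x, ((Sum.inr x : A ⊕ A), (Sum.inl b : B ⊕ A)) ∈ S') ∨
    (∃ x, ((Sum.inl x : A ⊕ A), (Sum.inl b : B ⊕ A)) ∈ S' ∧ P.rankB b x < P.rankB b a) := by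
  have hbne : b ≠ b0 := by
    intro he
    rw [he] at hlt
    omega
  have hne : ((Sum.inl a : A ⊕ A), (Sum.inl b : B ⊕ A)) ∉ S' := by
    intro hmem
    have := sm1 P hS hmem h
    simp only [Sum.inl.injEq] at this
    exact hbne this
  have hvA : (double P).voteAplus S' (Sum.inl a) (Sum.inl b) := by
    intro y' hy'
    have hy : y' = Sum.inl b0 := sm1 P hS hy' h
    subst hy
    simp only [PrefSys.rankA, double, drankA]
    omega
  obtain ⟨x', hx', hle⟩ := extract P hS hne (by simp [dadj, hadj]) hvA
  rcases x' with x | x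
  · right
    simp only [drankB] at hle
    have hlex : P.rankB b x ≤ P.rankB b a := by omega
    refine ⟨x, hx', ?_⟩
    rcases lt_or_eq_of_le hlex with h' | h'
    · exact h'
    · exfalso
      have hx_adj : P.adj x b := by
        have := sadj P hS hx'
        simpa [dadj] using this
      have hxa : x = a := P.rankB_inj b x a hx_adj hadj h'
      subst hxa
      exact hne hx'
  · exact Or.inl ⟨x, hx'⟩

lemma S2 (a : A) (b : B) (h1 : lv1 S' a) (hadj : P.adj a b) :
    (∃ x, ((Sum.inr x : A ⊕ A), (Sum.inl b : B ⊕ A)) ∈ S') ∨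
    (∃ x, ((Sum.inl x : A ⊕ A), (Sum.inl b : B ⊕ A)) ∈ S' ∧ P.rankB b x < P.rankB b a) := by
  have hd := lv1_dummy P hS a h1
  have hne : ((Sum.inl a : A ⊕ A), (Sum.inl b : B ⊕ A)) ∉ S' := by
    intro hmem
    exact absurd (sm1 P hS hmem hd) (by simp)
  have hvA : (double P).voteAplus S' (Sum.inl a) (Sum.inl b) := by
    intro y' hy'
    have hy : y' = Sum.inr a := sm1 P hS hy' hd
    subst hy
    simp only [PrefSys.rankA, double, drankA]
    exact rankA_lt_boundA P a b
  obtain ⟨x', hx', hle⟩ := extract P hS hne (by simp [dadj, hadj]) hvA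
  rcases x' with x | x
  · right
    simp only [drankB] at hle
    have hlex : P.rankB b x ≤ P.rankB b a := by omega
    refine ⟨x, hx', ?_⟩
    rcases lt_or_eq_of_le hlex with h' | h'
    · exact h'
    · exfalso
      have hx_adj : P.adj x b := by
        have := sadj P hS hx'
        simpa [dadj] using this
      have hxa : x = a := P.rankB_inj b x a hx_adj hadj h'
      subst hxa
      exact hne hx'
  · exact Or.inl ⟨x, hx'⟩

end

end DoubleLemmas

set_option linter.unusedSectionVars false
set_option linter.unusedVariables false

section DoubleLemmas2

variable {A B : Type} [Fintype A] [Fintype B] (P : PrefSys A B)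
variable (S' : Finset ((A ⊕ A) × (B ⊕ A)))

noncomputable def cA (a : A) (b : B) : ℤ :=
  if P.voteAplus (DD S') a b then 1 else if (a, b) ∈ DD S' then 0 else -1

noncomputable def cB (a : A) (b : B) : ℤ :=
  if P.voteBplus (DD S') a b then 1 else if (a, b) ∈ DD S' then 0 else -1

lemma yA_bounds (a : A) : -1 ≤ yA S' a ∧ yA S' a ≤ 1 := by
  unfold yA; split_ifs <;> omega

lemma yB_bounds (b : B) : -1 ≤ yB S' b ∧ yB S' b ≤ 1 := by
  unfold yB; split_ifs <;> omega

lemma cB_le_one (a : A) (b : B) : cB P S' a b ≤ 1 := by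
  unfold cB; split_ifs <;> omega

lemma yA_unmatched (a : A) (h : ∀ b, (a, b) ∉ DD S') : yA S' a = 0 := by
  have h1 : ¬ lv1 S' a := by
    rintro ⟨b, hb⟩
    exact h b ((mem_DD S').2 (Or.inr hb))
  have h0 : ¬ lv0 S' a := by
    rintro ⟨b, hb⟩
    exact h b ((mem_DD S').2 (Or.inl hb))
  rw [yA, if_neg h1, if_neg h0]

lemma yB_unmatched (b : B) (h : ∀ a, (a, b) ∉ DD S') : yB S' b = 0 := by
  have h1 : ¬ bl1 S' b := by
    rintro ⟨a, ha⟩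
    exact h a ((mem_DD S').2 (Or.inr ha))
  have h0 : ¬ bl0 S' b := by
    rintro ⟨a, ha⟩
    exact h a ((mem_DD S').2 (Or.inl ha))
  rw [yB, if_neg h1, if_neg h0]

lemma yA_matched_nonneg (a : A) (h : ∃ b, (a, b) ∈ DD S') : -1 ≤ yA S' a := (yA_bounds S' a).1

variable {S'}
variable (hS : (double P).Stable S')

section
include hS

lemma pair_zero {a : A} {b : B} (hD : (a, b) ∈ DD S') : yA S' a + yB S' b = 0 := by
  rcases (mem_DD S').1 hD with h | h
  · have h1 : ¬ lv1 S' a := fun hl => not_both P hS a ⟨b, h⟩ hl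
    have hbl1 : ¬ bl1 S' b := by
      rintro ⟨x, hx⟩
      exact absurd (sm2 P hS hx h) (by simp)
    rw [yA, if_neg h1, if_pos ⟨b, h⟩, yB, if_neg hbl1, if_pos ⟨a, h⟩]
    omega
  · rw [yA, if_pos ⟨b, h⟩, yB, if_pos ⟨a, h⟩]
    omega

lemma DD_matching : P.IsMatching (DD S') := by
  refine ⟨?_, ?_, ?_⟩
  · intro p hp
    rcases (mem_DD S').1 hp with h | h <;>
      · have := sadj P hS h
        simpa [dadj] using this
  · intro p hp q hq h1
    rcases (mem_DD S').1 hp with h | h <;> rcases (mem_DD S').1 hq with h' | h'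
    · rw [h1] at h
      have := sm1 P hS h h'
      simp only [Sum.inl.injEq] at this
      exact Prod.ext h1 this
    · exact absurd (not_both P hS q.1 ⟨p.2, h1 ▸ h⟩ ⟨q.2, h'⟩) not_false
    · exact absurd (not_both P hS q.1 ⟨q.2, h'⟩ ⟨p.2, h1 ▸ h⟩) not_false
    · rw [h1] at h
      have := sm1 P hS h h'
      simp only [Sum.inl.injEq] at this
      exact Prod.ext h1 this
  · intro p hp q hq h2
    rcases (mem_DD S').1 hp with h | h <;> rcases (mem_DD S').1 hq with h' | h'
    · rw [h2] at h
      have := sm2 P hS h h'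
      simp only [Sum.inl.injEq] at this
      exact Prod.ext this h2
    · rw [h2] at h
      exact absurd (sm2 P hS h h') (by simp)
    · rw [h2] at h
      exact absurd (sm2 P hS h h') (by simp)
    · rw [h2] at h
      have := sm2 P hS h h'
      simp only [Sum.inr.injEq] at this
      exact Prod.ext this h2

lemma KEL (a : A) (b : B) (hadj : P.adj a b) :
    cA P S' a b + cB P S' a b ≤ yA S' a + yB S' b := by
  by_cases hD : (a, b) ∈ DD S'
  · have hvA : ¬ P.voteAplus (DD S') a b := fun h => absurd (h b hD) (lt_irrefl _)
    have hvB : ¬ P.voteBplus (DD S') a b := fun h => absurd (h a hD) (lt_irrefl _)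
    rw [cA, if_neg hvA, if_pos hD, cB, if_neg hvB, if_pos hD, pair_zero P hS hD]
    omega
  · by_cases hvA : P.voteAplus (DD S') a b
    · have hcA : cA P S' a b = 1 := by rw [cA, if_pos hvA]
      by_cases h1 : lv1 S' a
      · obtain ⟨b0, hb0⟩ := h1
        have hD0 : (a, b0) ∈ DD S' := (mem_DD S').2 (Or.inr hb0)
        have hlt : P.rankA a b < P.rankA a b0 := hvA b0 hD0
        obtain ⟨x, hx, hxlt⟩ := S3 P hS a b b0 hb0 hadj hlt
        have hyB : yB S' b = 1 := by rw [yB, if_pos ⟨x, hx⟩]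
        have hyA : yA S' a = -1 := by rw [yA, if_pos ⟨b0, hb0⟩]
        have hDx : (x, b) ∈ DD S' := (mem_DD S').2 (Or.inr hx)
        have hvB : ¬ P.voteBplus (DD S') a b := fun h => absurd (h x hDx) (by omega)
        have hcB : cB P S' a b = -1 := by rw [cB, if_neg hvB, if_neg hD]
        omega
      · by_cases h0 : lv0 S' a
        · obtain ⟨b0, hb0⟩ := h0
          have hD0 : (a, b0) ∈ DD S' := (mem_DD S').2 (Or.inl hb0)
          have hlt : P.rankA a b < P.rankA a b0 := hvA b0 hD0
          have hyA : yA S' a = 1 := by rw [yA, if_neg h1, if_pos ⟨b0, hb0⟩]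
          rcases S4 P hS a b b0 hb0 hadj hlt with ⟨x, hx⟩ | ⟨x, hx, hxlt⟩
          · have hyB : yB S' b = 1 := by rw [yB, if_pos ⟨x, hx⟩]
            have := cB_le_one P S' a b
            omega
          · have hbl1 : ¬ bl1 S' b := by
              rintro ⟨x', hx'⟩
              exact absurd (sm2 P hS hx' hx) (by simp)
            have hyB : yB S' b = -1 := by rw [yB, if_neg hbl1, if_pos ⟨x, hx⟩]
            have hDx : (x, b) ∈ DD S' := (mem_DD S').2 (Or.inl hx)
            have hvB : ¬ P.voteBplus (DD S') a b := fun h => absurd (h x hDx) (by omega)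
            have hcB : cB P S' a b = -1 := by rw [cB, if_neg hvB, if_neg hD]
            omega
        · have hyA : yA S' a = 0 := by rw [yA, if_neg h1, if_neg h0]
          obtain ⟨x, hx, hxlt⟩ := S1 P hS a b h0 h1 hadj
          have hyB : yB S' b = 1 := by rw [yB, if_pos ⟨x, hx⟩]
          have hDx : (x, b) ∈ DD S' := (mem_DD S').2 (Or.inr hx)
          have hvB : ¬ P.voteBplus (DD S') a b := fun h => absurd (h x hDx) (by omega)
          have hcB : cB P S' a b = -1 := by rw [cB, if_neg hvB, if_neg hD]
          omega
    · have hcA : cA P S' a b = -1 := by rw [cA, if_neg hvA, if_neg hD]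
      by_cases hvB : P.voteBplus (DD S') a b
      · have hcB : cB P S' a b = 1 := by rw [cB, if_pos hvB]
        by_cases h1 : lv1 S' a
        · rcases S2 P hS a b h1 hadj with ⟨x, hx⟩ | ⟨x, hx, hxlt⟩
          · have hyB : yB S' b = 1 := by rw [yB, if_pos ⟨x, hx⟩]
            have hyA : yA S' a = -1 := by rw [yA, if_pos h1]
            omega
          · have hDx : (x, b) ∈ DD S' := (mem_DD S').2 (Or.inl hx)
            exact absurd (hvB x hDx) (by omega)
        · by_cases h0 : lv0 S' a
          · have hyA : yA S' a = 1 := by rw [yA, if_neg h1, if_pos h0]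
            have := (yB_bounds S' b).1
            omega
          · exfalso
            apply hvA
            intro b' hb'
            rcases (mem_DD S').1 hb' with h | h
            · exact (h0 ⟨b', h⟩).elim
            · exact (h1 ⟨b', h⟩).elim
      · have hcB : cB P S' a b = -1 := by rw [cB, if_neg hvB, if_neg hD]
        have := (yA_bounds S' a).1
        have := (yB_bounds S' b).1
        omega

lemma L1 (a : A) (b : B) (hadj : P.adj a b) (hun : ∀ b', (a, b') ∉ DD S') :
    ∃ a', (a', b) ∈ DD S' := by
  have h0 : ¬ lv0 S' a := by
    rintro ⟨b', hb'⟩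
    exact hun b' ((mem_DD S').2 (Or.inl hb'))
  have h1 : ¬ lv1 S' a := by
    rintro ⟨b', hb'⟩
    exact hun b' ((mem_DD S').2 (Or.inr hb'))
  obtain ⟨x, hx, -⟩ := S1 P hS a b h0 h1 hadj
  exact ⟨x, (mem_DD S').2 (Or.inr hx)⟩

lemma L2 (a1 : A) (b0 : B) (a0 : A) (b1 : B) (hD : (a1, b0) ∈ DD S')
    (hadj0 : P.adj a0 b0) (hadj1 : P.adj a1 b1)
    (hun0 : ∀ b', (a0, b') ∉ DD S') (hun1 : ∀ a', (a', b1) ∉ DD S') : False := by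
  rcases (mem_DD S').1 hD with h | h
  · have h00 : ¬ lv0 S' a0 := by
      rintro ⟨b', hb'⟩
      exact hun0 b' ((mem_DD S').2 (Or.inl hb'))
    have h01 : ¬ lv1 S' a0 := by
      rintro ⟨b', hb'⟩
      exact hun0 b' ((mem_DD S').2 (Or.inr hb'))
    have hc1un := unmatched_struct P hS a0 h00 h01
    have hmem : ((Sum.inr a0 : A ⊕ A), (Sum.inl b0 : B ⊕ A)) ∈ S' := by
      apply stab' P hS
      · show dadj P _ _
        simpa [dadj] using hadj0
      · intro y' hy'
        exact (hc1un y' hy').elim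
      · intro x' hx'
        have hx : x' = Sum.inl a1 := sm2 P hS hx' h
        rw [hx]
        simp only [PrefSys.rankB, double, drankB]
        have := rankB_lt_boundB P a0 b0
        omega
    exact absurd (sm2 P hS hmem h) (by simp)
  · have hd := lv1_dummy P hS a1 ⟨b0, h⟩
    have hmem : ((Sum.inl a1 : A ⊕ A), (Sum.inl b1 : B ⊕ A)) ∈ S' := by
      apply stab' P hS
      · show dadj P _ _
        simpa [dadj] using hadj1
      · intro y' hy'
        have hy : y' = Sum.inr a1 := sm1 P hS hy' hd
        rw [hy]
        simp only [PrefSys.rankA, double, drankA]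
        exact rankA_lt_boundA P a1 b1
      · intro x' hx'
        exfalso
        rcases x' with c | c
        · exact hun1 c ((mem_DD S').2 (Or.inl hx'))
        · exact hun1 c ((mem_DD S').2 (Or.inr hx'))
    exact hun1 a1 ((mem_DD S').2 (Or.inl hmem))

end

end DoubleLemmas2

section Popularity

variable {A B : Type} [Fintype A] [Fintype B] (P : PrefSys A B)

lemma sum_split_fst (N : Finset (A × B)) (hinj : ∀ p ∈ N, ∀ q ∈ N, p.1 = q.1 → p = q)
    (f : A → ℤ) :
    ∑ a, f a = ∑ p ∈ N, f p.1 + ∑ a ∈ Finset.univ \ N.image Prod.fst, f a := by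
  have h1 : ∑ x ∈ N.image Prod.fst, f x = ∑ p ∈ N, f p.1 :=
    Finset.sum_image (fun x hx y hy h => hinj x hx y hy h)
  rw [← Finset.sum_sdiff (Finset.subset_univ (N.image Prod.fst)), h1, add_comm]

lemma sum_split_snd (N : Finset (A × B)) (hinj : ∀ p ∈ N, ∀ q ∈ N, p.2 = q.2 → p = q)
    (f : B → ℤ) :
    ∑ b, f b = ∑ p ∈ N, f p.2 + ∑ b ∈ Finset.univ \ N.image Prod.snd, f b := by
  have h1 : ∑ x ∈ N.image Prod.snd, f x = ∑ p ∈ N, f p.2 :=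
    Finset.sum_image (fun x hx y hy h => hinj x hx y hy h)
  rw [← Finset.sum_sdiff (Finset.subset_univ (N.image Prod.snd)), h1, add_comm]

variable {S' : Finset ((A ⊕ A) × (B ⊕ A))} (hS : (double P).Stable S')

section
include hS

lemma ysum_zero : ∑ a, yA S' a + ∑ b, yB S' b = 0 := by
  have hDm := DD_matching P hS
  rw [sum_split_fst (DD S') hDm.2.1 (yA S'), sum_split_snd (DD S') hDm.2.2 (yB S')]
  have h1 : ∑ a ∈ Finset.univ \ (DD S').image Prod.fst, yA S' a = 0 := by
    apply Finset.sum_eq_zero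
    intro a ha
    apply yA_unmatched
    intro b hb
    exact (Finset.mem_sdiff.1 ha).2 (Finset.mem_image_of_mem Prod.fst hb)
  have h2 : ∑ b ∈ Finset.univ \ (DD S').image Prod.snd, yB S' b = 0 := by
    apply Finset.sum_eq_zero
    intro b hb
    apply yB_unmatched
    intro a ha
    exact (Finset.mem_sdiff.1 hb).2 (Finset.mem_image_of_mem Prod.snd ha)
  have h3 : ∑ p ∈ DD S', yA S' p.1 + ∑ p ∈ DD S', yB S' p.2 = 0 := by
    rw [← Finset.sum_add_distrib]
    apply Finset.sum_eq_zero
    intro p hp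
    exact pair_zero P hS hp
  omega

lemma vA_eq {N : Finset (A × B)} (hN : P.IsMatching N) {p : A × B} (hp : p ∈ N) :
    (if P.prefA N (DD S') p.1 then (1 : ℤ) else 0) -
      (if P.prefA (DD S') N p.1 then (1 : ℤ) else 0) = cA P S' p.1 p.2 := by
  have hDm := DD_matching P hS
  have hpe : (p.1, p.2) ∈ N := by rwa [Prod.mk.eta]
  have e1 : P.prefA N (DD S') p.1 ↔ P.voteAplus (DD S') p.1 p.2 := by
    constructor
    · rintro ⟨b, hb, hall⟩
      have hb2 : b = p.2 := congrArg Prod.snd (hN.2.1 (p.1, b) hb p hp rfl)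
      subst hb2
      exact hall
    · intro h
      exact ⟨p.2, hpe, h⟩
  have e2 : P.prefA (DD S') N p.1 ↔
      ∃ b', (p.1, b') ∈ DD S' ∧ P.rankA p.1 b' < P.rankA p.1 p.2 := by
    constructor
    · rintro ⟨b', hb', hall⟩
      exact ⟨b', hb', hall p.2 hpe⟩
    · rintro ⟨b', hb', hlt⟩
      refine ⟨b', hb', ?_⟩
      intro b'' hb''
      have : b'' = p.2 := congrArg Prod.snd (hN.2.1 (p.1, b'') hb'' p hp rfl)
      rw [this]
      exact hlt
  by_cases hv : P.voteAplus (DD S') p.1 p.2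
  · have hnd : ¬ P.prefA (DD S') N p.1 := by
      rw [e2]
      rintro ⟨b', hb', hlt⟩
      exact absurd (hv b' hb') (by omega)
    rw [if_pos (e1.mpr hv), if_neg hnd, cA, if_pos hv]
    norm_num
  · by_cases hmem : (p.1, p.2) ∈ DD S'
    · have hnd : ¬ P.prefA (DD S') N p.1 := by
        rw [e2]
        rintro ⟨b', hb', hlt⟩
        have : b' = p.2 := congrArg Prod.snd (hDm.2.1 (p.1, b') hb' (p.1, p.2) hmem rfl)
        rw [this] at hlt
        omega
      rw [if_neg (fun h => hv (e1.mp h)), if_neg hnd, cA, if_neg hv, if_pos hmem]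
      norm_num
    · have hd : P.prefA (DD S') N p.1 := by
        rw [e2]
        rw [PrefSys.voteAplus] at hv
        push_neg at hv
        obtain ⟨b', hb', hle⟩ := hv
        refine ⟨b', hb', ?_⟩
        rcases lt_or_eq_of_le hle with h | h
        · exact h
        · exfalso
          have hadjb' : P.adj p.1 b' := hDm.1 (p.1, b') hb'
          have hadjp : P.adj p.1 p.2 := hN.1 p hp
          have : b' = p.2 := P.rankA_inj p.1 b' p.2 hadjb' hadjp h
          rw [this] at hb'
          exact hmem hb'
      rw [if_neg (fun h => hv (e1.mp h)), if_pos hd, cA, if_neg hv, if_neg hmem]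
      norm_num

lemma vB_eq {N : Finset (A × B)} (hN : P.IsMatching N) {p : A × B} (hp : p ∈ N) :
    (if P.prefB N (DD S') p.2 then (1 : ℤ) else 0) -
      (if P.prefB (DD S') N p.2 then (1 : ℤ) else 0) = cB P S' p.1 p.2 := by
  have hDm := DD_matching P hS
  have hpe : (p.1, p.2) ∈ N := by rwa [Prod.mk.eta]
  have e1 : P.prefB N (DD S') p.2 ↔ P.voteBplus (DD S') p.1 p.2 := by
    constructor
    · rintro ⟨a, ha, hall⟩
      have ha2 : a = p.1 := congrArg Prod.fst (hN.2.2 (a, p.2) ha p hp rfl)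
      subst ha2
      exact hall
    · intro h
      exact ⟨p.1, hpe, h⟩
  have e2 : P.prefB (DD S') N p.2 ↔
      ∃ a', (a', p.2) ∈ DD S' ∧ P.rankB p.2 a' < P.rankB p.2 p.1 := by
    constructor
    · rintro ⟨a', ha', hall⟩
      exact ⟨a', ha', hall p.1 hpe⟩
    · rintro ⟨a', ha', hlt⟩
      refine ⟨a', ha', ?_⟩
      intro a'' ha''
      have : a'' = p.1 := congrArg Prod.fst (hN.2.2 (a'', p.2) ha'' p hp rfl)
      rw [this]
      exact hlt
  by_cases hv : P.voteBplus (DD S') p.1 p.2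
  · have hnd : ¬ P.prefB (DD S') N p.2 := by
      rw [e2]
      rintro ⟨a', ha', hlt⟩
      exact absurd (hv a' ha') (by omega)
    rw [if_pos (e1.mpr hv), if_neg hnd, cB, if_pos hv]
    norm_num
  · by_cases hmem : (p.1, p.2) ∈ DD S'
    · have hnd : ¬ P.prefB (DD S') N p.2 := by
        rw [e2]
        rintro ⟨a', ha', hlt⟩
        have : a' = p.1 := congrArg Prod.fst (hDm.2.2 (a', p.2) ha' (p.1, p.2) hmem rfl)
        rw [this] at hlt
        omega
      rw [if_neg (fun h => hv (e1.mp h)), if_neg hnd, cB, if_neg hv, if_pos hmem]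
      norm_num
    · have hd : P.prefB (DD S') N p.2 := by
        rw [e2]
        rw [PrefSys.voteBplus] at hv
        push_neg at hv
        obtain ⟨a', ha', hle⟩ := hv
        refine ⟨a', ha', ?_⟩
        rcases lt_or_eq_of_le hle with h | h
        · exact h
        · exfalso
          have hadja' : P.adj a' p.2 := hDm.1 (a', p.2) ha'
          have hadjp : P.adj p.1 p.2 := hN.1 p hp
          have : a' = p.1 := P.rankB_inj p.2 a' p.1 hadja' hadjp h
          rw [this] at ha'
          exact hmem ha'
      rw [if_neg (fun h => hv (e1.mp h)), if_pos hd, cB, if_neg hv, if_neg hmem]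
      norm_num

lemma DD_popular : P.Popular (DD S') := by
  refine ⟨DD_matching P hS, ?_⟩
  intro N hN
  have hDm := DD_matching P hS
  set va : A → ℤ := fun a =>
    (if P.prefA N (DD S') a then (1 : ℤ) else 0) - (if P.prefA (DD S') N a then 1 else 0)
    with hva
  set vb : B → ℤ := fun b =>
    (if P.prefB N (DD S') b then (1 : ℤ) else 0) - (if P.prefB (DD S') N b then 1 else 0)
    with hvb
  have key1 : ∀ p ∈ N, va p.1 + vb p.2 ≤ yA S' p.1 + yB S' p.2 := by
    intro p hp
    rw [hva, hvb]
    simp only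
    rw [vA_eq P hS hN hp, vB_eq P hS hN hp]
    exact KEL P hS p.1 p.2 (hN.1 p hp)
  have key2 : ∀ a, a ∉ N.image Prod.fst → va a ≤ yA S' a := by
    intro a ha
    have hunm : ∀ b, (a, b) ∉ N := fun b hb => ha (Finset.mem_image_of_mem Prod.fst hb)
    have h1 : ¬ P.prefA N (DD S') a := by
      rintro ⟨b, hb, -⟩
      exact hunm b hb
    rw [hva]
    simp only
    rw [if_neg h1]
    by_cases h0 : lv0 S' a
    · have hpref : P.prefA (DD S') N a := by
        obtain ⟨b0, hb0⟩ := h0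
        exact ⟨b0, (mem_DD S').2 (Or.inl hb0), fun b' hb' => absurd hb' (hunm b')⟩
      rw [if_pos hpref]
      have h1' : ¬ lv1 S' a := fun hl => not_both P hS a h0 hl
      rw [yA, if_neg h1', if_pos h0]
      omega
    · by_cases h1' : lv1 S' a
      · have hpref : P.prefA (DD S') N a := by
          obtain ⟨b0, hb0⟩ := h1'
          exact ⟨b0, (mem_DD S').2 (Or.inr hb0), fun b' hb' => absurd hb' (hunm b')⟩
        rw [if_pos hpref, yA, if_pos h1']
        omega
      · have hnd : ¬ P.prefA (DD S') N a := by
          rintro ⟨b', hb', -⟩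
          rcases (mem_DD S').1 hb' with h | h
          · exact h0 ⟨b', h⟩
          · exact h1' ⟨b', h⟩
        rw [if_neg hnd, yA, if_neg h1', if_neg h0]
        omega
  have key3 : ∀ b, b ∉ N.image Prod.snd → vb b ≤ yB S' b := by
    intro b hb
    have hunm : ∀ a, (a, b) ∉ N := fun a ha => hb (Finset.mem_image_of_mem Prod.snd ha)
    have h1 : ¬ P.prefB N (DD S') b := by
      rintro ⟨a, ha, -⟩
      exact hunm a ha
    rw [hvb]
    simp only
    rw [if_neg h1]
    by_cases h0 : bl0 S' b
    · have hpref : P.prefB (DD S') N b := by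
        obtain ⟨a0, ha0⟩ := h0
        exact ⟨a0, (mem_DD S').2 (Or.inl ha0), fun a' ha' => absurd ha' (hunm a')⟩
      rw [if_pos hpref]
      by_cases h1' : bl1 S' b
      · rw [yB, if_pos h1']
        omega
      · rw [yB, if_neg h1', if_pos h0]
        omega
    · by_cases h1' : bl1 S' b
      · have hpref : P.prefB (DD S') N b := by
          obtain ⟨a0, ha0⟩ := h1'
          exact ⟨a0, (mem_DD S').2 (Or.inr ha0), fun a' ha' => absurd ha' (hunm a')⟩
        rw [if_pos hpref, yB, if_pos h1']
        omega
      · have hnd : ¬ P.prefB (DD S') N b := by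
          rintro ⟨a', ha', -⟩
          rcases (mem_DD S').1 ha' with h | h
          · exact h0 ⟨a', h⟩
          · exact h1' ⟨a', h⟩
        rw [if_neg hnd, yB, if_neg h1', if_neg h0]
        omega
  -- total sum is ≤ 0
  have total : ∑ a, va a + ∑ b, vb b ≤ 0 := by
    rw [sum_split_fst N hN.2.1 va, sum_split_snd N hN.2.2 vb]
    have hbound1 : ∑ p ∈ N, va p.1 + ∑ p ∈ N, vb p.2 ≤ ∑ p ∈ N, yA S' p.1 + ∑ p ∈ N, yB S' p.2 := by
      rw [← Finset.sum_add_distrib, ← Finset.sum_add_distrib]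
      exact Finset.sum_le_sum key1
    have hbound2 : ∑ a ∈ Finset.univ \ N.image Prod.fst, va a ≤
        ∑ a ∈ Finset.univ \ N.image Prod.fst, yA S' a :=
      Finset.sum_le_sum (fun a ha => key2 a (Finset.mem_sdiff.1 ha).2)
    have hbound3 : ∑ b ∈ Finset.univ \ N.image Prod.snd, vb b ≤
        ∑ b ∈ Finset.univ \ N.image Prod.snd, yB S' b :=
      Finset.sum_le_sum (fun b hb => key3 b (Finset.mem_sdiff.1 hb).2)
    have hz := ysum_zero P hS
    rw [sum_split_fst N hN.2.1 (yA S'), sum_split_snd N hN.2.2 (yB S')] at hz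
    omega
  -- convert to phi
  have hphiA1 : ((Finset.univ.filter (P.prefA N (DD S'))).card : ℤ) -
      ((Finset.univ.filter (P.prefA (DD S') N)).card : ℤ) = ∑ a, va a := by
    rw [hva, ← Finset.sum_boole, ← Finset.sum_boole, ← Finset.sum_sub_distrib]
  have hphiB1 : ((Finset.univ.filter (P.prefB N (DD S'))).card : ℤ) -
      ((Finset.univ.filter (P.prefB (DD S') N)).card : ℤ) = ∑ b, vb b := by
    rw [hvb, ← Finset.sum_boole, ← Finset.sum_boole, ← Finset.sum_sub_distrib]
  have hphi : ∀ (X Y : Finset (A × B)), P.phi X Y =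
      (Finset.univ.filter (P.prefA X Y)).card + (Finset.univ.filter (P.prefB X Y)).card := by
    intro X Y
    rw [PrefSys.phi]
    congr 1 <;> rw [Nat.card_eq_fintype_card] <;> exact Fintype.card_subtype _
  rw [hphi, hphi]
  omega

end

end Popularity

section Counting

variable {A B : Type} [Fintype A] [Fintype B] (P : PrefSys A B)

lemma counting (D N : Finset (A × B)) (hD : P.IsMatching D) (hN : P.IsMatching N)
    (h1 : ∀ p ∈ N, (∃ b', (p.1, b') ∈ D) ∨ ∃ a', (a', p.2) ∈ D)
    (h2 : ∀ a1 b0 a0 b1, (a1, b0) ∈ D → (a0, b0) ∈ N → (a1, b1) ∈ N →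
      (∀ b', (a0, b') ∉ D) → (∀ a', (a', b1) ∉ D) → False) :
    2 * N.card ≤ 3 * D.card := by
  classical
  set f : A × B → A × B := fun p => if h : ∃ b', (p.1, b') ∈ D then (p.1, h.choose) else p
    with hf
  set g : A × B → A × B := fun p => if h : ∃ a', (a', p.2) ∈ D then (h.choose, p.2) else p
    with hg
  have hfD : ∀ p, (h : ∃ b', (p.1, b') ∈ D) → f p ∈ D ∧ (f p).1 = p.1 := by
    intro p h
    rw [hf]
    simp only [dif_pos h]
    exact ⟨h.choose_spec, trivial⟩
  have hgD : ∀ p, (h : ∃ a', (a', p.2) ∈ D) → g p ∈ D ∧ (g p).2 = p.2 := by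
    intro p h
    rw [hg]
    simp only [dif_pos h]
    exact ⟨h.choose_spec, trivial⟩
  set PA := N.filter (fun p => ∃ b', (p.1, b') ∈ D) with hPA
  set PB := N.filter (fun p => ∃ a', (a', p.2) ∈ D) with hPB
  set NA := N.filter (fun p => (∃ b', (p.1, b') ∈ D) ∧ ∀ a', (a', p.2) ∉ D) with hNA
  set NB := N.filter (fun p => (∀ b', (p.1, b') ∉ D) ∧ ∃ a', (a', p.2) ∈ D) with hNB
  -- first injection
  have inj1 : PA.card ≤ D.card := by
    apply Finset.card_le_card_of_injOn f
    · intro p hp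
      exact (hfD p (Finset.mem_filter.1 hp).2).1
    · intro p hp q hq heq
      rw [Finset.mem_coe, hPA, Finset.mem_filter] at hp hq
      have e1 : p.1 = q.1 := by
        have a1 := (hfD p hp.2).2
        have a2 := (hfD q hq.2).2
        rw [← a1, ← a2, heq]
      exact hN.2.1 p hp.1 q hq.1 e1
  have inj2 : PB.card ≤ D.card := by
    apply Finset.card_le_card_of_injOn g
    · intro p hp
      exact (hgD p (Finset.mem_filter.1 hp).2).1
    · intro p hp q hq heq
      rw [Finset.mem_coe, hPB, Finset.mem_filter] at hp hq
      have e1 : p.2 = q.2 := by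
        have a1 := (hgD p hp.2).2
        have a2 := (hgD q hq.2).2
        rw [← a1, ← a2, heq]
      exact hN.2.2 p hp.1 q hq.1 e1
  -- third injection on NA ∪ NB
  have inj3 : (NA ∪ NB).card ≤ D.card := by
    apply Finset.card_le_card_of_injOn
      (fun p => if (∃ b', (p.1, b') ∈ D) then f p else g p)
    · intro p hp
      rcases Finset.mem_union.1 hp with h | h
      · rw [hNA, Finset.mem_filter] at h
        beta_reduce
        rw [if_pos h.2.1]
        exact (hfD p h.2.1).1
      · rw [hNB, Finset.mem_filter] at h
        beta_reduce
        rw [if_neg (by rintro ⟨b', hb'⟩; exact h.2.1 b' hb')]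
        exact (hgD p h.2.2).1
    · intro p hp q hq heq
      rw [Finset.mem_coe] at hp hq
      simp only at heq
      rcases Finset.mem_union.1 hp with hp' | hp' <;> rcases Finset.mem_union.1 hq with hq' | hq'
      · rw [hNA, Finset.mem_filter] at hp' hq'
        rw [if_pos hp'.2.1, if_pos hq'.2.1] at heq
        have e1 : p.1 = q.1 := by
          have a1 := (hfD p hp'.2.1).2
          have a2 := (hfD q hq'.2.1).2
          rw [← a1, ← a2, heq]
        exact hN.2.1 p hp'.1 q hq'.1 e1
      · -- p ∈ NA, q ∈ NB : bad configuration
        exfalso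
        rw [hNA, Finset.mem_filter] at hp'
        rw [hNB, Finset.mem_filter] at hq'
        rw [if_pos hp'.2.1, if_neg (by rintro ⟨b', hb'⟩; exact hq'.2.1 b' hb')] at heq
        have hfp := hfD p hp'.2.1
        have hgq := hgD q hq'.2.2
        have hDedge : (p.1, q.2) ∈ D := by
          have : f p = (p.1, q.2) := by
            have e1 : (f p).1 = p.1 := hfp.2
            have e2 : (f p).2 = q.2 := by rw [heq]; exact hgq.2
            rw [← e1, ← e2]
          rw [← this]
          exact hfp.1
        exact h2 p.1 q.2 q.1 p.2 hDedge (by rw [Prod.mk.eta]; exact hq'.1)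
          (by rw [Prod.mk.eta]; exact hp'.1) hq'.2.1 hp'.2.2
      · -- p ∈ NB, q ∈ NA : symmetric
        exfalso
        rw [hNB, Finset.mem_filter] at hp'
        rw [hNA, Finset.mem_filter] at hq'
        rw [if_pos hq'.2.1, if_neg (by rintro ⟨b', hb'⟩; exact hp'.2.1 b' hb')] at heq
        have hfq := hfD q hq'.2.1
        have hgp := hgD p hp'.2.2
        have hDedge : (q.1, p.2) ∈ D := by
          have : f q = (q.1, p.2) := by
            have e1 : (f q).1 = q.1 := hfq.2
            have e2 : (f q).2 = p.2 := by rw [← heq]; exact hgp.2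
            rw [← e1, ← e2]
          rw [← this]
          exact hfq.1
        exact h2 q.1 p.2 p.1 q.2 hDedge (by rw [Prod.mk.eta]; exact hp'.1)
          (by rw [Prod.mk.eta]; exact hq'.1) hp'.2.1 hq'.2.2
      · rw [hNB, Finset.mem_filter] at hp' hq'
        rw [if_neg (by rintro ⟨b', hb'⟩; exact hp'.2.1 b' hb'),
          if_neg (by rintro ⟨b', hb'⟩; exact hq'.2.1 b' hb')] at heq
        have e1 : p.2 = q.2 := by
          have a1 := (hgD p hp'.2.2).2
          have a2 := (hgD q hq'.2.2).2
          rw [← a1, ← a2, heq]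
        exact hN.2.2 p hp'.1 q hq'.1 e1
  -- partition counting
  have split1 : PA.card + NB.card = N.card := by
    have base := Finset.card_filter_add_card_filter_not
      (s := N) (p := fun p => ∃ b', (p.1, b') ∈ D)
    have hset : N.filter (fun p => ¬ ∃ b', (p.1, b') ∈ D) = NB := by
      rw [hNB]
      apply Finset.filter_congr
      intro p hp
      constructor
      · intro h
        push_neg at h
        exact ⟨h, (h1 p hp).resolve_left (by push_neg; exact h)⟩
      · intro h
        push_neg
        exact h.1
    rw [hset] at base
    rw [hPA]
    omega
  have split2 : PB.card + NA.card = N.card := by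
    have base := Finset.card_filter_add_card_filter_not
      (s := N) (p := fun p => ∃ a', (a', p.2) ∈ D)
    have hset : N.filter (fun p => ¬ ∃ a', (a', p.2) ∈ D) = NA := by
      rw [hNA]
      apply Finset.filter_congr
      intro p hp
      constructor
      · intro h
        push_neg at h
        exact ⟨(h1 p hp).resolve_right (by push_neg; exact h), h⟩
      · intro h
        push_neg
        exact h.2
    rw [hset] at base
    rw [hPB]
    omega
  have hdisj : Disjoint NA NB := by
    rw [Finset.disjoint_left]
    intro p hp hq
    rw [hNA, Finset.mem_filter] at hp
    rw [hNB, Finset.mem_filter] at hq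
    obtain ⟨b', hb'⟩ := hp.2.1
    exact hq.2.1 b' hb'
  have hcup : NA.card + NB.card = (NA ∪ NB).card := (Finset.card_union_of_disjoint hdisj).symm
  omega

end Counting

/-- A largest popular matching has size at least `2/3` of the
size of a maximum matching. -/
theorem max_popular_ge_two_thirds {A B : Type} [Fintype A] [Fintype B]
    (P : PrefSys A B) (M : Finset (A × B)) (hM : P.Popular M)
    (hmax : ∀ M', P.Popular M' → M'.card ≤ M.card) :
    ∀ N, P.IsMatching N → 2 * N.card ≤ 3 * M.card := by
  intro N hN
  obtain ⟨S', hS⟩ := exists_stable (double P)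
  have hpop := DD_popular P hS
  have hcard : (DD S').card ≤ M.card := hmax _ hpop
  have hcount : 2 * N.card ≤ 3 * (DD S').card := by
    apply counting P (DD S') N (DD_matching P hS) hN
    · intro p hp
      by_cases hmA : ∃ b', (p.1, b') ∈ DD S'
      · exact Or.inl hmA
      · push_neg at hmA
        exact Or.inr (L1 P hS p.1 p.2 (hN.1 p hp) hmA)
    · intro a1 b0 a0 b1 hd hq hp hun0 hun1
      exact L2 P hS a1 b0 a0 b1 hd (hN.1 (a0, b0) hq) (hN.1 (a1, b1) hp) hun0 hun1
  omega
end

section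
/- If M is a popular matching in G and there is an alternating path in G_M with respect to M from a vertex unmatched in M, then every vertex on that path other than possibly endpoints beyond a single (+,+) edge has a consistent f-value; in particular, if every edge of G_M between a vertex of f-value 1 on the A-side and f-value 0 on the B-side is absent, there is no augmenting path with respect to M in G_M between an unmatched man (f-value 1) and an unmatched woman (f-value 0). -/
open Classical

namespace PrefSys

variable {A B : Type} (P : PrefSys A B)

/-- Vertices of `G`, as a sum type. -/
abbrev V (A B : Type) := Sum A B

/-- Adjacency in the subgraph `G_M` (symmetrized). -/
def vAdjGM (M : Finset (A × B)) : V A B → V A B → Prop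
  | .inl a, .inr b => P.inGM M a b
  | .inr b, .inl a => P.inGM M a b
  | _, _ => False

/-- The (unordered) pair `{x,y}` is an edge of the matching `M`. -/
def vInM (M : Finset (A × B)) : V A B → V A B → Prop
  | .inl a, .inr b => (a, b) ∈ M
  | .inr b, .inl a => (a, b) ∈ M
  | _, _ => False

/-- The (unordered) pair `{x,y}` is an edge labeled `(+,+)` wrt `M`. -/
def vPlusPlus (M : Finset (A × B)) : V A B → V A B → Prop
  | .inl a, .inr b => P.Blocking M a b
  | .inr b, .inl a => P.Blocking M a b
  | _, _ => False

/-- The vertex `x` is matched in `M`. -/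
def vMatched (M : Finset (A × B)) : V A B → Prop
  | .inl a => ∃ b, (a, b) ∈ M
  | .inr b => ∃ a, (a, b) ∈ M

/-- The list of consecutive pairs of a vertex list. -/
def edgesOf (v : List (V A B)) : List (V A B × V A B) := v.zip v.tail

/-- An alternating path with respect to `M` in the subgraph `G_M`:
a list of distinct vertices, consecutive ones adjacent in `G_M`, whose edges
alternate between matching and non-matching edges. -/
def IsAltPath (M : Finset (A × B)) (v : List (V A B)) : Prop :=
  v.Nodup ∧ v.Chain' (P.vAdjGM M) ∧
  (edgesOf v).Chain' (fun e f => vInM M e.1 e.2 ↔ ¬ vInM M f.1 f.2)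

/-- An augmenting path with respect to `M` in `G_M`: an alternating path with
at least one edge, both of whose endpoints are unmatched in `M`. -/
def IsAugPath (M : Finset (A × B)) (v : List (V A B)) : Prop :=
  P.IsAltPath M v ∧ 2 ≤ v.length ∧
  (∀ x, v.head? = some x → ¬ vMatched M x) ∧
  (∀ x, v.getLast? = some x → ¬ vMatched M x)

/-- The edges of a cycle given by a vertex list (consecutive pairs plus the
closing edge from the last vertex to the first). -/
def cycEdgesOf (v : List (V A B)) : List (V A B × V A B) :=
  match v.head?, v.getLast? with
  | some x, some y => edgesOf v ++ [(y, x)]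
  | _, _ => []

/-- An alternating cycle with respect to `M` in the subgraph `G_M`. -/
def IsAltCycle (M : Finset (A × B)) (v : List (V A B)) : Prop :=
  v.Nodup ∧ 4 ≤ v.length ∧
  (∀ e ∈ cycEdgesOf v, P.vAdjGM M e.1 e.2) ∧
  (cycEdgesOf v).Chain' (fun e f => vInM M e.1 e.2 ↔ ¬ vInM M f.1 f.2)

/-- The set of `G`-edges (as pairs in `A × B`) used by a list of vertex pairs. -/
noncomputable def edgeFinset (l : List (V A B × V A B)) : Finset (A × B) :=
  (l.filterMap (fun e => match e with
    | (.inl a, .inr b) => some (a, b)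
    | (.inr b, .inl a) => some (a, b)
    | _ => none)).toFinset

/-- `M ⊕ ρ`: switch `M` along the path with vertex list `v`. -/
noncomputable def augment (M : Finset (A × B)) (v : List (V A B)) : Finset (A × B) :=
  symmDiff M (edgeFinset (edgesOf v))

end PrefSys

namespace PrefSys

variable {A B : Type}

lemma vAdj_sides {P : PrefSys A B} {M : Finset (A × B)} {x y : V A B}
    (h : P.vAdjGM M x y) : x.isLeft = !y.isLeft := by
  cases x <;> cases y <;> simp [vAdjGM] at h ⊢

lemma vInM_matched {M : Finset (A × B)} {x y : V A B} (h : vInM M x y) :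
    vMatched M x ∧ vMatched M y := by
  cases x <;> cases y <;> simp [vInM] at h <;>
    exact ⟨⟨_, h⟩, ⟨_, h⟩⟩

lemma edgesOf_cons_cons (x y : V A B) (l : List (V A B)) :
    edgesOf (x :: y :: l) = (x, y) :: edgesOf (y :: l) := by
  simp [edgesOf]

/-- Key propagation lemma: along an alternating walk in `G_M` all vertices
receive the same `f`-value, and an unmatched final vertex lies on the side
opposite to the value. -/
lemma key (P : PrefSys A B) {M : Finset (A × B)}
    (f : V A B → Bool)
    (hfM : ∀ p ∈ M, f (Sum.inl p.1) = f (Sum.inr p.2))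
    (hcut : ∀ y z, P.adj y z → f (Sum.inl y) = true → f (Sum.inr z) = false →
      ¬ P.voteAplus M y z ∧ ¬ P.voteBplus M y z)
    (t : Bool) :
    ∀ (l : List (V A B)) (x : V A B),
      List.Chain (P.vAdjGM M) x l →
      (edgesOf (x :: l)).Chain' (fun e f => vInM M e.1 e.2 ↔ ¬ vInM M f.1 f.2) →
      f x = t →
      (∀ y, l.head? = some y →
        ((vInM M x y → x.isLeft = !t) ∧ (¬ vInM M x y → x.isLeft = t))) →
      ∀ z, l.getLast? = some z → f z = t ∧ (¬ vMatched M z → z.isLeft = !t) := by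
  intro l
  induction l with
  | nil => intro x _ _ _ _ z hz; simp at hz
  | cons y l' IH =>
    intro x hch halt hfx hinv z hz
    have hadj : P.vAdjGM M x y := (List.chain_cons.mp hch).1
    have hch' : List.Chain (P.vAdjGM M) y l' := (List.chain_cons.mp hch).2
    have hside : x.isLeft = !y.isLeft := vAdj_sides hadj
    have hinv' := hinv y rfl
    -- establish `f y = t` and the direction info in both cases
    have main : f y = t ∧ (vInM M x y → y.isLeft = t) ∧ (¬ vInM M x y → y.isLeft = !t) := by
      by_cases hm : vInM M x y
      · refine ⟨?_, fun _ => ?_, fun h => absurd hm h⟩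
        · cases x with
          | inl a =>
            cases y with
            | inl a' => simp [vInM] at hm
            | inr b => exact hfx ▸ (hfM (a, b) hm).symm
          | inr b =>
            cases y with
            | inl a => exact hfx ▸ (hfM (a, b) hm)
            | inr b' => simp [vInM] at hm
        · have := hinv'.1 hm
          rw [this] at hside
          revert hside; cases y <;> cases t <;> simp
      · have hxl : x.isLeft = t := hinv'.2 hm
        have hyl : y.isLeft = !t := by rw [hxl] at hside; revert hside; cases y <;> cases t <;> simp
        refine ⟨?_, fun h => absurd h hm, fun _ => hyl⟩
        cases x with
        | inl a =>
          cases y with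
          | inl a' => simp [vAdjGM] at hadj
          | inr b =>
            -- t = true here
            have ht : t = true := by simpa using hxl
            obtain ⟨hab, hor⟩ : P.inGM M a b := hadj
            have hnm : (a, b) ∉ M := by simpa [vInM] using hm
            have hv : P.voteAplus M a b ∨ P.voteBplus M a b := by tauto
            by_contra hfb
            have hfb' : f (Sum.inr b) = false := by
              rw [ht] at hfb; simpa using hfb
            have := hcut a b hab (by rw [hfx, ht]) hfb'
            tauto
        | inr b =>
          cases y with
          | inr b' => simp [vAdjGM] at hadj
          | inl a =>
            -- t = false here
            have ht : t = false := by simpa using hxl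
            obtain ⟨hab, hor⟩ : P.inGM M a b := hadj
            have hnm : (a, b) ∉ M := by simpa [vInM] using hm
            have hv : P.voteAplus M a b ∨ P.voteBplus M a b := by tauto
            by_contra hfa
            have hfa' : f (Sum.inl a) = true := by
              rw [ht] at hfa; simpa using hfa
            have := hcut a b hab hfa' (by rw [hfx, ht])
            tauto
    obtain ⟨hfy, hdir1, hdir2⟩ := main
    cases l' with
    | nil =>
      simp only [List.getLast?_singleton, Option.some.injEq] at hz
      subst hz
      refine ⟨hfy, fun hum => ?_⟩
      have hnm : ¬ vInM M x y := fun h => hum (vInM_matched h).2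
      exact hdir2 hnm
    | cons y' l'' =>
      have halt' : (edgesOf (y :: y' :: l'')).Chain'
          (fun e f => vInM M e.1 e.2 ↔ ¬ vInM M f.1 f.2) := by
        rw [edgesOf_cons_cons] at halt
        exact halt.tail
      have hrel : vInM M x y ↔ ¬ vInM M y y' := by
        rw [edgesOf_cons_cons, edgesOf_cons_cons] at halt
        exact (List.isChain_cons_cons.mp halt).1
      have hinv2 : ∀ w, (y' :: l'').head? = some w →
          ((vInM M y w → y.isLeft = !t) ∧ (¬ vInM M y w → y.isLeft = t)) := by
        intro w hw
        simp only [List.head?_cons, Option.some.injEq] at hw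
        subst hw
        constructor
        · intro h
          have hnot : ¬ vInM M x y := fun h' => (hrel.mp h') h
          exact hdir2 hnot
        · intro h
          exact hdir1 (hrel.mpr h)
      have hlast : (y' :: l'').getLast? = some z := by
        simpa using hz
      exact IH y hch' halt' hfy hinv2 z hlast

end PrefSys

open PrefSys in
/-- if `f` assigns values in `{0,1}` (here `Bool`, `true = 1`) to
the vertices so that unmatched men get 1, unmatched women get 0, `M`-partners
get equal values, and every `G`-edge from a man of value 1 to a woman of value
0 is labeled `(-,-)` (hence absent from `G_M`), then there is no augmenting
path with respect to `M` in `G_M`. -/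
theorem f_values_no_aug_path {A B : Type} [Fintype A] [Fintype B]
    (P : PrefSys A B) (M : Finset (A × B)) (hM : P.IsMatching M)
    (f : V A B → Bool)
    (hfA : ∀ a : A, (∀ b, (a, b) ∉ M) → f (Sum.inl a) = true)
    (hfB : ∀ b : B, (∀ a, (a, b) ∉ M) → f (Sum.inr b) = false)
    (hfM : ∀ p ∈ M, f (Sum.inl p.1) = f (Sum.inr p.2))
    (hcut : ∀ y z, P.adj y z → f (Sum.inl y) = true → f (Sum.inr z) = false →
      ¬ P.voteAplus M y z ∧ ¬ P.voteBplus M y z) :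
    ¬ ∃ v, P.IsAugPath M v := by
  rintro ⟨v, ⟨⟨hnd, hch, halt⟩, hlen, hhead, hlast⟩⟩
  match v, hlen with
  | x :: y :: l, _ =>
    have hxum : ¬ vMatched M x := hhead x rfl
    set t : Bool := f x with ht
    -- first vertex side agrees with t
    have hxside : x.isLeft = t := by
      cases x with
      | inl a =>
        have : ∀ b, (a, b) ∉ M := by
          intro b hb; exact hxum ⟨b, hb⟩
        simp [ht, hfA a this]
      | inr b =>
        have : ∀ a, (a, b) ∉ M := by
          intro a ha; exact hxum ⟨a, ha⟩
        simp [ht, hfB b this]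
    have hch' : List.Chain (P.vAdjGM M) x (y :: l) := hch
    have hinv : ∀ w, (y :: l).head? = some w →
        ((vInM M x w → x.isLeft = !t) ∧ (¬ vInM M x w → x.isLeft = t)) := by
      intro w hw
      exact ⟨fun h => absurd (vInM_matched h).1 hxum, fun _ => hxside⟩
    obtain ⟨z, hz⟩ : ∃ z, (y :: l).getLast? = some z := by
      cases h : (y :: l).getLast? with
      | none => simp at h
      | some z => exact ⟨z, rfl⟩
    obtain ⟨hfz, hzside⟩ := P.key f hfM hcut t (y :: l) x hch' halt rfl hinv z hz
    have hzum : ¬ vMatched M z := by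
      apply hlast
      simpa [List.getLast?_cons_cons] using hz
    have hzs : z.isLeft = !t := hzside hzum
    cases z with
    | inl a =>
      -- z.isLeft = true, so t = false, but unmatched man has f = true
      have ht' : t = false := by simpa using hzs.symm
      have : ∀ b, (a, b) ∉ M := fun b hb => hzum ⟨b, hb⟩
      rw [hfA a this, ht'] at hfz
      exact Bool.noConfusion hfz
    | inr b =>
      have ht' : t = true := by simpa using hzs.symm
      have : ∀ a, (a, b) ∉ M := fun a ha => hzum ⟨a, ha⟩
      rw [hfB b this, ht'] at hfz
      exact Bool.noConfusion hfz
end
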